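/- For z ∈ ℍ and s, s' ∈ ℂ with Re(s) > 1/2 and Re(s') > 1/2, the series K(z;s,s') := (1/2) Σ_{γ ∈ SL(2,ℤ)} Im(γz)^{s+s'} / |γz|^{2s} converges absolutely, and K(z;s,s') = K(z;s',s). -/

import Mathlib

noncomputable section

open Complex Filter MeasureTheory

abbrev SL2Z := Matrix.SpecialLinearGroup (Fin 2) ℤ
abbrev SL2R := Matrix.SpecialLinearGroup (Fin 2) ℝ

/-- `j(γ,z) = cz+d` for `γ ∈ SL(2,ℤ)`. -/
def jZ (γ : SL2Z) (z : ℂ) : ℂ := ((γ 1 0 : ℤ) : ℂ) * z + ((γ 1 1 : ℤ) : ℂ)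

/-- The Möbius action `γz = (az+b)/(cz+d)` for `γ ∈ SL(2,ℤ)`. -/
def actZ (γ : SL2Z) (z : ℂ) : ℂ := (((γ 0 0 : ℤ) : ℂ) * z + ((γ 0 1 : ℤ) : ℂ)) / jZ γ z

/-- `j(γ,z) = cz+d` for `γ ∈ SL(2,ℝ)`. -/
def jR (γ : SL2R) (z : ℂ) : ℂ := ((γ 1 0 : ℝ) : ℂ) * z + ((γ 1 1 : ℝ) : ℂ)

/-- The Möbius action for `γ ∈ SL(2,ℝ)`. -/
def actR (γ : SL2R) (z : ℂ) : ℂ := (((γ 0 0 : ℝ) : ℂ) * z + ((γ 0 1 : ℝ) : ℂ)) / jR γ z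

/-- Coprime pairs `(c,d)`, parametrizing the cosets `B\Γ` via the bottom row. -/
def CP : Type := {p : ℤ × ℤ // IsCoprime p.1 p.2}

/-- Coprime pairs with normalized sign, parametrizing `Γ∞\Γ` via the bottom row. -/
def CP1 : Type := {p : ℤ × ℤ // IsCoprime p.1 p.2 ∧ (0 < p.1 ∨ (p.1 = 0 ∧ 0 < p.2))}

/-- `j(γ,z) = cz+d` in terms of the bottom row. -/
def jP (p : ℤ × ℤ) (z : ℂ) : ℂ := (p.1 : ℂ) * z + (p.2 : ℂ)

/-- `c_{γδ⁻¹} = c_γ d_δ − d_γ c_δ` in terms of the bottom rows of `γ, δ`. -/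
def crossP (p q : ℤ × ℤ) : ℤ := p.1 * q.2 - p.2 * q.1

/-- `Im(γz) = Im z / |cz+d|²` in terms of the bottom row of `γ`. -/
def imP (p : ℤ × ℤ) (z : ℂ) : ℝ := z.im / Complex.normSq (jP p z)

/-- A representative Möbius action for a coset with bottom row the coprime pair `(c,d)`:
choosing `a, b` with `ad−bc = 1`, return `(az+b)/(cz+d)`. -/
def mobiusP (p : ℤ × ℤ) (h : IsCoprime p.1 p.2) (z : ℂ) : ℂ :=
  ((h.choose_spec.choose : ℂ) * z - (h.choose : ℂ)) / jP p z

def mobiusCP (p : CP) (z : ℂ) : ℂ := mobiusP p.1 p.2 z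
def mobiusCP1 (p : CP1) (z : ℂ) : ℂ := mobiusP p.1 p.2.1 z

/-- The term of the double Eisenstein series `E_{s,k-s}(z,w)`. -/
def dblEisTerm (k : ℤ) (s w : ℂ) (z : ℂ) (pq : CP × CP) : ℂ :=
  if 0 < crossP pq.1.1 pq.2.1 then
    ((crossP pq.1.1 pq.2.1 : ℤ) : ℂ) ^ (w - 1) * (jP pq.1.1 z / jP pq.2.1 z) ^ (-s) *
      (jP pq.2.1 z) ^ (-k)
  else 0

/-- The double Eisenstein series `E_{s,k-s}(z,w)`. -/
def dblEis (k : ℤ) (s w : ℂ) (z : ℂ) : ℂ := ∑' pq : CP × CP, dblEisTerm k s w z pq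

/-- The completing factor for `E*_{s,k-s}(z,w)`. -/
def eisFactor (k : ℤ) (s w : ℂ) : ℂ :=
  Complex.exp (s * Real.pi * I / 2) * Complex.Gamma s * Complex.Gamma ((k : ℂ) - s) *
      Complex.Gamma ((k : ℂ) - w) * riemannZeta (1 - w + s) * riemannZeta (1 - w + (k : ℂ) - s) /
    ((2 : ℂ) ^ ((3 : ℂ) - w) * (Real.pi : ℂ) ^ ((k : ℂ) + 1 - w) * Complex.Gamma ((k : ℂ) - 1))

/-- The completed double Eisenstein series `E*_{s,k-s}(z,w)`. -/
def dblEisStar (k : ℤ) (s w : ℂ) (z : ℂ) : ℂ := eisFactor k s w * dblEis k s w z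

/-- The weight-`k` Hecke operator `T_n`. -/
def hecke (k : ℤ) (n : ℕ) (f : ℂ → ℂ) (z : ℂ) : ℂ :=
  (n : ℂ) ^ (k - 1) * ∑ p ∈ n.divisorsAntidiagonal,
    ((p.2 : ℕ) : ℂ) ^ (-k) * ∑ b ∈ Finset.range p.2, f (((p.1 : ℂ) * z + (b : ℂ)) / (p.2 : ℂ))

/-- The completed `L`-function `L*(f,s) = ∫_0^∞ f(iy) y^{s-1} dy`. -/
def Lstar (f : ℂ → ℂ) (s : ℂ) : ℂ := ∫ y in Set.Ioi (0 : ℝ), f ((y : ℂ) * I) * (y : ℂ) ^ (s - 1)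

/-- The twisted completed `L`-function `L*(f,s;x) = ∫_0^∞ f(iy+x) y^{s-1} dy`. -/
def LstarT (f : ℂ → ℂ) (s : ℂ) (x : ℚ) : ℂ :=
  ∫ y in Set.Ioi (0 : ℝ), f ((x : ℂ) + (y : ℂ) * I) * (y : ℂ) ^ (s - 1)

/-- The standard fundamental domain for `SL(2,ℤ)\ℍ`, as a subset of `ℝ²`. -/
def fundDom : Set (ℝ × ℝ) := {p | 0 < p.2 ∧ |p.1| ≤ 1 / 2 ∧ 1 ≤ p.1 ^ 2 + p.2 ^ 2}

/-- The Petersson inner product `⟨g,f⟩ = ∫_F g(z) conj(f(z)) y^k dx dy / y²`. -/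
def petersson (k : ℤ) (g f : ℂ → ℂ) : ℂ :=
  ∫ p in fundDom, g ((p.1 : ℂ) + (p.2 : ℂ) * I) * (starRingEnd ℂ) (f ((p.1 : ℂ) + (p.2 : ℂ) * I)) *
    ((p.2 : ℂ)) ^ (k - 2)

/-- `f` is a normalized Hecke eigenform of weight `k` for `SL(2,ℤ)`, with Fourier
coefficients `a`. -/
structure IsHeckeEigenform (k : ℤ) (f : ℂ → ℂ) (a : ℕ → ℂ) : Prop where
  holo : DifferentiableOn ℂ f {z : ℂ | 0 < z.im}
  transform : ∀ γ : SL2Z, ∀ z : ℂ, 0 < z.im → f (actZ γ z) = jZ γ z ^ k * f z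
  expansion : ∀ z : ℂ, 0 < z.im →
    HasSum (fun n : ℕ => a n * Complex.exp (2 * Real.pi * I * (n : ℂ) * z)) (f z)
  cusp : a 0 = 0
  normalized : a 1 = 1
  eigen : ∀ n : ℕ, 0 < n → ∃ lam : ℂ, ∀ z : ℂ, 0 < z.im → hecke k n f z = lam * f z

/-- The generalized Cohen kernel `C_k(z,s;x)`. -/
def cohen (k : ℤ) (s : ℂ) (x : ℚ) (z : ℂ) : ℂ :=
  (1 / 2) * ∑' γ : SL2Z, (actZ γ z + (x : ℂ)) ^ (-s) * (jZ γ z) ^ (-k)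

/-- The Poincaré series `P_k(z;m)` (over `Γ∞\Γ`). -/
def poincare (k : ℤ) (m : ℕ) (z : ℂ) : ℂ :=
  ∑' p : CP1, Complex.exp (2 * Real.pi * I * (m : ℂ) * mobiusCP1 p z) * (jP p.1 z) ^ (-k)

/-- The series `Q_k(z,l;m)`. -/
def Qser (k : ℤ) (l m : ℕ) (z : ℂ) : ℂ :=
  if l = 0 then poincare k m z
  else (1 / 2) * ∑' p : CP, Complex.exp (2 * Real.pi * I * (m : ℂ) * mobiusCP p z) *
    ((p.1.1 : ℂ)) ^ l * (jP p.1 z) ^ (-(k + (l : ℤ)))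

/-- The Rankin–Cohen bracket `[g₁,g₂]_n` of weights `k₁, k₂`. -/
def RC (k₁ k₂ n : ℕ) (g₁ g₂ : ℂ → ℂ) (z : ℂ) : ℂ :=
  ∑ r ∈ Finset.range (n + 1), (-1 : ℂ) ^ r * (Nat.choose (k₁ + n - 1) (n - r) : ℂ) *
    (Nat.choose (k₂ + n - 1) r : ℂ) * iteratedDeriv r g₁ z * iteratedDeriv (n - r) g₂ z

/-- The coefficient `A_{k₁,k₂}(l,u)_n`. -/
def Acoef (k₁ k₂ l u n : ℕ) : ℂ :=
  ((Nat.factorial (k₁ + n - 1) * Nat.factorial (k₂ + n - 1) : ℕ) : ℂ) /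
    ((Nat.factorial l * Nat.factorial u * Nat.factorial (n - l - u) *
      Nat.factorial (k₁ + l - 1) * Nat.factorial (k₂ + u - 1) : ℕ) : ℂ)

/-- The term of the double Poincaré series. -/
def dblPoinTerm (k₁ k₂ : ℤ) (w : ℂ) (m₁ m₂ : ℕ) (z : ℂ) (pq : CP × CP) : ℂ :=
  if 0 < crossP pq.1.1 pq.2.1 then
    ((crossP pq.1.1 pq.2.1 : ℤ) : ℂ) ^ (w - 1) *
      Complex.exp (2 * Real.pi * I * ((m₁ : ℂ) * mobiusCP pq.1 z + (m₂ : ℂ) * mobiusCP pq.2 z)) *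
      (jP pq.1.1 z) ^ (-k₁) * (jP pq.2.1 z) ^ (-k₂)
  else 0

/-- The double Poincaré series `P_{k₁,k₂}(z,w;m₁,m₂)`. -/
def dblPoin (k₁ k₂ : ℤ) (w : ℂ) (m₁ m₂ : ℕ) (z : ℂ) : ℂ :=
  ∑' pq : CP × CP, dblPoinTerm k₁ k₂ w m₁ m₂ z pq

/-- The double Eisenstein series `E_{k₁,k₂}(z,w)` with two integral weights. -/
def dblEis2 (k₁ k₂ : ℤ) (w : ℂ) (z : ℂ) : ℂ :=
  ∑' pq : CP × CP, if 0 < crossP pq.1.1 pq.2.1 then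
    ((crossP pq.1.1 pq.2.1 : ℤ) : ℂ) ^ (w - 1) * (jP pq.1.1 z) ^ (-k₁) * (jP pq.2.1 z) ^ (-k₂)
  else 0

/-- `f` transforms with weight `k` under `SL(2,ℤ)`. -/
def IsWeaklyModular (k : ℤ) (f : ℂ → ℂ) : Prop :=
  ∀ γ : SL2Z, ∀ z : ℂ, 0 < z.im → f (actZ γ z) = jZ γ z ^ k * f z

/-- `f` is a holomorphic modular form of weight `k` for `SL(2,ℤ)`. -/
def IsModularForm (k : ℤ) (f : ℂ → ℂ) : Prop :=
  DifferentiableOn ℂ f {z : ℂ | 0 < z.im} ∧ IsWeaklyModular k f ∧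
    ∃ C A : ℝ, ∀ z : ℂ, A ≤ z.im → ‖f z‖ ≤ C

/-- `f` is a holomorphic cusp form of weight `k` for `SL(2,ℤ)`. -/
def IsCuspForm (k : ℤ) (f : ℂ → ℂ) : Prop :=
  DifferentiableOn ℂ f {z : ℂ | 0 < z.im} ∧ IsWeaklyModular k f ∧
    Tendsto f (comap Complex.im atTop) (nhds 0)

/-- The term of the non-holomorphic kernel `K(z;s,s')`. -/
def KkerTerm (z s s' : ℂ) (γ : SL2Z) : ℂ :=
  (((actZ γ z).im : ℝ) : ℂ) ^ (s + s') / ((‖actZ γ z‖ : ℝ) : ℂ) ^ (2 * s)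

/-- The non-holomorphic kernel `K(z;s,s') = (1/2) Σ_{γ ∈ SL(2,ℤ)} Im(γz)^{s+s'}/|γz|^{2s}`. -/
def Kker (z s s' : ℂ) : ℂ := (1 / 2) * ∑' γ : SL2Z, KkerTerm z s s' γ

/-- The term of the non-holomorphic double Eisenstein series `ℰ(z,w;s,s')`. -/
def nhTerm (w s s' : ℂ) (z : ℂ) (pq : CP1 × CP1) : ℂ :=
  if crossP pq.1.1 pq.2.1 ≠ 0 then
    ((imP pq.1.1 z : ℝ) : ℂ) ^ s * ((imP pq.2.1 z : ℝ) : ℂ) ^ s' *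
      ((|crossP pq.1.1 pq.2.1| : ℤ) : ℂ) ^ (-w)
  else 0

/-- The non-holomorphic double Eisenstein series `ℰ(z,w;s,s')`. -/
def nhE (z : ℂ) (w s s' : ℂ) : ℂ := ∑' pq : CP1 × CP1, nhTerm w s s' z pq

/-- `g` is a cusp form of weight `k` with Fourier coefficients `b`. -/
structure IsCuspFormWithCoeffs (k : ℤ) (g : ℂ → ℂ) (b : ℕ → ℂ) : Prop where
  holo : DifferentiableOn ℂ g {z : ℂ | 0 < z.im}
  transform : ∀ γ : SL2Z, ∀ z : ℂ, 0 < z.im → g (actZ γ z) = jZ γ z ^ k * g z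
  expansion : ∀ z : ℂ, 0 < z.im →
    HasSum (fun n : ℕ => b n * Complex.exp (2 * Real.pi * I * (n : ℂ) * z)) (g z)
  czero : b 0 = 0

/-- The term of the quadruple-sum form of the double Eisenstein series:
`(ad−bc)^{w−1} ((az+b)/(cz+d))^{−s} (cz+d)^{−k}` for `ad−bc > 0`. -/
def quadTerm (k : ℤ) (s w : ℂ) (z : ℂ) (v : ℤ × ℤ × ℤ × ℤ) : ℂ :=
  if 0 < v.1 * v.2.2.2 - v.2.1 * v.2.2.1 then
    ((v.1 * v.2.2.2 - v.2.1 * v.2.2.1 : ℤ) : ℂ) ^ (w - 1) *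
      (((v.1 : ℂ) * z + (v.2.1 : ℂ)) / ((v.2.2.1 : ℂ) * z + (v.2.2.2 : ℂ))) ^ (-s) *
      ((v.2.2.1 : ℂ) * z + (v.2.2.2 : ℂ)) ^ (-k)
  else 0

/-- The twisted version: `(ad−bc)^{w−1} ((az+b)/(cz+d) + x)^{−s} (cz+d)^{−k}` for `ad−bc > 0`. -/
def quadTermT (k : ℤ) (s w : ℂ) (x : ℚ) (z : ℂ) (v : ℤ × ℤ × ℤ × ℤ) : ℂ :=
  if 0 < v.1 * v.2.2.2 - v.2.1 * v.2.2.1 then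
    ((v.1 * v.2.2.2 - v.2.1 * v.2.2.1 : ℤ) : ℂ) ^ (w - 1) *
      (((v.1 : ℂ) * z + (v.2.1 : ℂ)) / ((v.2.2.1 : ℂ) * z + (v.2.2.2 : ℂ)) + (x : ℂ)) ^ (-s) *
      ((v.2.2.1 : ℂ) * z + (v.2.2.2 : ℂ)) ^ (-k)
  else 0

namespace St16

/-- numerator of actZ -/
def rZ (γ : SL2Z) (z : ℂ) : ℂ := ((γ 0 0 : ℤ) : ℂ) * z + ((γ 0 1 : ℤ) : ℂ)

lemma det_entries (γ : SL2Z) : γ 0 0 * γ 1 1 - γ 0 1 * γ 1 0 = 1 := by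
  have h := γ.property
  rw [Matrix.det_fin_two] at h
  exact h

lemma lin_ne_zero {z : ℂ} (hz : z.im ≠ 0) {c d : ℤ} (h : ¬(c = 0 ∧ d = 0)) :
    (c : ℂ) * z + (d : ℂ) ≠ 0 := by
  intro H
  have him : (c : ℝ) * z.im = 0 := by
    have := congrArg Complex.im H
    simpa using this
  have hc : c = 0 := by
    rcases mul_eq_zero.mp him with h1 | h1
    · exact_mod_cast h1
    · exact absurd h1 hz
  have hre := congrArg Complex.re H
  rw [hc] at hre
  simp at hre
  exact h ⟨hc, by exact_mod_cast hre⟩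

lemma cross_im (z : ℂ) (a b c d : ℤ) :
    (((a : ℂ) * z + (b : ℂ)) * (starRingEnd ℂ) ((c : ℂ) * z + (d : ℂ))).im
      = ((a * d - b * c : ℤ) : ℝ) * z.im := by
  simp [Complex.mul_im, Complex.add_re, Complex.add_im, Complex.mul_re]
  ring

lemma bottom_ne (γ : SL2Z) : ¬(γ 1 0 = 0 ∧ γ 1 1 = 0) := by
  rintro ⟨h1, h2⟩
  have := det_entries γ
  rw [h1, h2] at this
  simp at this

lemma top_ne (γ : SL2Z) : ¬(γ 0 0 = 0 ∧ γ 0 1 = 0) := by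
  rintro ⟨h1, h2⟩
  have := det_entries γ
  rw [h1, h2] at this
  simp at this

lemma jZ_ne {z : ℂ} (hz : 0 < z.im) (γ : SL2Z) : jZ γ z ≠ 0 :=
  lin_ne_zero (ne_of_gt hz) (bottom_ne γ)

lemma rZ_ne {z : ℂ} (hz : 0 < z.im) (γ : SL2Z) : rZ γ z ≠ 0 :=
  lin_ne_zero (ne_of_gt hz) (top_ne γ)

lemma det_im {z : ℂ} (γ : SL2Z) :
    (rZ γ z * (starRingEnd ℂ) (jZ γ z)).im = z.im := by
  rw [rZ, jZ, cross_im, det_entries]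
  simp

/-- comparison weight on ℤ -/
def psi (e : ℝ) (k : ℤ) : ℝ := (((max (|k| - 1) 0 : ℤ) : ℝ) ^ 2 + 1) ^ (-e)

lemma psi_nonneg (e : ℝ) (k : ℤ) : 0 ≤ psi e k := Real.rpow_nonneg (by positivity) _

lemma psi_summable {e : ℝ} (he : 1 / 2 < e) : Summable (psi e) := by
  have he0 : 0 ≤ e := by linarith
  have hbase : Summable (fun k : ℤ => (4 : ℝ) ^ e * (1 / |(k : ℝ) + 1/2| ^ (2 * e))) :=
    ((Real.summable_one_div_int_add_rpow (1/2) (2*e)).mpr (by linarith)).mul_left _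
  refine Summable.of_nonneg_of_le (fun k => psi_nonneg e k) (fun k => ?_) hbase
  set M : ℝ := ((max (|k| - 1) 0 : ℤ) : ℝ) with hM
  have hM0 : 0 ≤ M := by rw [hM]; exact_mod_cast le_max_right _ _
  have hMK : (|k| : ℝ) - 1 ≤ M := by rw [hM]; exact_mod_cast le_max_left _ _
  have hK0 : (0:ℝ) ≤ (|k| : ℝ) := by positivity
  have habs : |(k : ℝ) + 1/2| ≤ (|k| : ℝ) + 1/2 := by
    calc |(k : ℝ) + 1/2| ≤ |(k:ℝ)| + |(1/2 : ℝ)| := abs_add_le _ _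
    _ = (|k| : ℝ) + 1/2 := by rw [_root_.abs_of_nonneg (by norm_num : (0:ℝ) ≤ 1/2)]
  have hsq : |(k : ℝ) + 1/2| ^ 2 ≤ 4 * (M ^ 2 + 1) := by
    have h1 : |(k : ℝ) + 1/2| ^ 2 ≤ ((|k| : ℝ) + 1/2) ^ 2 :=
      pow_le_pow_left₀ (abs_nonneg _) habs 2
    nlinarith [sq_nonneg (M - ((|k|:ℝ) - 1)), sq_nonneg M, sq_nonneg ((|k|:ℝ) - 1),
      mul_nonneg hM0 hM0, sq_nonneg (2*(|k|:ℝ) - 3)]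
  have hx0 : (0:ℝ) < |(k : ℝ) + 1/2| := by
    have : (k : ℝ) + 1/2 ≠ 0 := by
      intro h
      have h2 : (2*k : ℝ) = -1 := by linarith
      have : (2*k : ℤ) = -1 := by exact_mod_cast h2
      omega
    exact abs_pos.mpr this
  have hpow : |(k : ℝ) + 1/2| ^ (2*e) ≤ (4:ℝ)^e * (M^2 + 1)^e := by
    have h1 : |(k : ℝ) + 1/2| ^ (2*e) = (|(k : ℝ) + 1/2| ^ 2) ^ e := by
      rw [← Real.rpow_natCast |(k : ℝ) + 1/2| 2, ← Real.rpow_mul (abs_nonneg _)]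
      norm_num
    rw [h1, ← Real.mul_rpow (by norm_num) (by positivity)]
    exact Real.rpow_le_rpow (by positivity) hsq he0
  have hA : (0:ℝ) < |(k : ℝ) + 1/2| ^ (2*e) := Real.rpow_pos_of_pos hx0 _
  have hB : (0:ℝ) < (M^2+1)^e := Real.rpow_pos_of_pos (by positivity) _
  rw [psi, ← hM, Real.rpow_neg (by positivity), ← one_div]
  calc 1 / (M^2+1)^e ≤ (4:ℝ)^e / (|(k : ℝ) + 1/2| ^ (2*e)) := by
        rw [div_le_div_iff₀ hB hA]; nlinarith [hpow]
  _ = (4:ℝ)^e * (1 / |(k : ℝ) + 1/2| ^ (2*e)) := by ring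

/-- Core estimate on one fiber. -/
lemma fiber_bound {e : ℝ} (he : 0 ≤ e) {y : ℝ} (hy : 0 < y) {q r₀ : ℂ}
    (hq : q ≠ 0) (hdet : (r₀ * (starRingEnd ℂ) q).im = y) (n : ℤ)
    (hcond : normSq q ≤ normSq (r₀ + (n : ℂ) * q)) :
    normSq (r₀ + (n : ℂ) * q) ^ (-e) ≤
      2 ^ e * normSq q ^ (-e) *
        psi e (n + round ((r₀ * (starRingEnd ℂ) q).re / normSq q)) := by
  have hNq : (0:ℝ) < normSq q := normSq_pos.mpr hq
  set Nq := normSq q with hNqdef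
  set R : ℝ := (r₀ * (starRingEnd ℂ) q).re with hRdef
  set u : ℝ := R / Nq with hudef
  set N : ℝ := normSq (r₀ + (n : ℂ) * q) with hNdef
  have key : N * Nq = (R + n * Nq) ^ 2 + y ^ 2 := by
    have h1 : N * Nq = normSq ((r₀ + (n : ℂ) * q) * (starRingEnd ℂ) q) := by
      rw [Complex.normSq_mul, Complex.normSq_conj]
    have h2 : (r₀ + (n : ℂ) * q) * (starRingEnd ℂ) q
        = r₀ * (starRingEnd ℂ) q + (n : ℂ) * ((Nq : ℝ) : ℂ) := by
      rw [add_mul, mul_assoc, Complex.mul_conj]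
    rw [h1, h2, Complex.normSq_apply]
    simp [hdet, ← hRdef]
    ring
  have hNval : N = Nq * (((n : ℝ) + u) ^ 2 + (y / Nq) ^ 2) := by
    have h3 : Nq * (((n : ℝ) + u) ^ 2 + (y / Nq) ^ 2) * Nq = (R + n * Nq) ^ 2 + y ^ 2 := by
      rw [hudef]
      field_simp
      ring
    have := key.trans h3.symm
    exact mul_right_cancel₀ (ne_of_gt hNq) this
  set v : ℝ := y / Nq with hvdef
  have hv : 0 < v := div_pos hy hNq
  have hone : 1 ≤ ((n : ℝ) + u) ^ 2 + v ^ 2 := by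
    rw [hNval] at hcond
    nlinarith
  set k : ℤ := n + round u with hkdef
  set M : ℝ := ((max (|k| - 1) 0 : ℤ) : ℝ) with hMdef
  have hM0 : 0 ≤ M := by rw [hMdef]; exact_mod_cast le_max_right _ _
  have habs : M ≤ |(n : ℝ) + u| := by
    have h4 : |u - (round u : ℝ)| ≤ 1/2 := abs_sub_round u
    have h5 : |((k : ℝ))| - 1 ≤ |(n : ℝ) + u| := by
      have hk : ((k : ℝ)) = ((n : ℝ) + u) + ((round u : ℝ) - u) := by
        rw [hkdef]; push_cast; ring
      calc |((k : ℝ))| - 1 ≤ (|(n : ℝ) + u| + |(round u : ℝ) - u|) - 1 := by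
            rw [hk]; have := abs_add_le ((n : ℝ) + u) ((round u : ℝ) - u); linarith
      _ ≤ |(n : ℝ) + u| := by rw [abs_sub_comm]; linarith
    have h6 : M ≤ max (|(k : ℝ)| - 1) 0 := by
      rw [hMdef]
      push_cast
      simp
    calc M ≤ max (|(k : ℝ)| - 1) 0 := h6
    _ ≤ |(n : ℝ) + u| := max_le h5 (abs_nonneg _)
  have hMsq : M ^ 2 ≤ ((n : ℝ) + u) ^ 2 := by
    calc M ^ 2 ≤ |(n : ℝ) + u| ^ 2 := pow_le_pow_left₀ hM0 habs 2
    _ = ((n : ℝ) + u) ^ 2 := sq_abs _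
  have hlow : Nq * ((M ^ 2 + 1) / 2) ≤ N := by
    rw [hNval]
    have h7 : (M ^ 2 + 1) / 2 ≤ ((n : ℝ) + u) ^ 2 + v ^ 2 := by nlinarith
    nlinarith
  have hlowpos : (0:ℝ) < Nq * ((M ^ 2 + 1) / 2) := by positivity
  have hstep : N ^ (-e) ≤ (Nq * ((M ^ 2 + 1) / 2)) ^ (-e) :=
    Real.rpow_le_rpow_of_nonpos hlowpos hlow (neg_nonpos.mpr he)
  refine hstep.trans (le_of_eq ?_)
  rw [Real.mul_rpow hNq.le (by positivity), Real.div_rpow (by positivity) (by norm_num),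
    Real.rpow_neg (by norm_num : (0:ℝ) ≤ 2)]
  rw [psi, ← hMdef]
  rw [Real.rpow_neg (by positivity : (0:ℝ) ≤ M ^ 2 + 1)]
  field_simp

/-- `U p * c + V p * d = 1` data from coprimality. -/
def U (p : CP) : ℤ := p.2.choose
def V (p : CP) : ℤ := p.2.choose_spec.choose

lemma hUV (p : CP) : U p * p.1.1 + V p * p.1.2 = 1 := p.2.choose_spec.choose_spec

/-- Parametrization of `SL(2,ℤ)` by (bottom row, fiber index). -/
def Phi (x : CP × ℤ) : SL2Z :=
  ⟨!![V x.1 + x.2 * x.1.1.1, -U x.1 + x.2 * x.1.1.2; x.1.1.1, x.1.1.2], by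
    rw [Matrix.det_fin_two_of]
    ring_nf
    linarith [hUV x.1]⟩

lemma Phi_entry00 (x : CP × ℤ) : Phi x 0 0 = V x.1 + x.2 * x.1.1.1 := by
  simp [Phi]
lemma Phi_entry01 (x : CP × ℤ) : Phi x 0 1 = -U x.1 + x.2 * x.1.1.2 := by
  simp [Phi]
lemma Phi_entry10 (x : CP × ℤ) : Phi x 1 0 = x.1.1.1 := by
  simp [Phi]
lemma Phi_entry11 (x : CP × ℤ) : Phi x 1 1 = x.1.1.2 := by
  simp [Phi]

lemma Phi_bijective : Function.Bijective Phi := by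
  constructor
  · rintro ⟨p, n⟩ ⟨p', n'⟩ h
    have e10 : p.1.1 = p'.1.1 := by
      have := congrArg (fun M : SL2Z => M 1 0) h
      simpa [Phi_entry10] using this
    have e11 : p.1.2 = p'.1.2 := by
      have := congrArg (fun M : SL2Z => M 1 1) h
      simpa [Phi_entry11] using this
    have hp : p = p' := Subtype.ext (Prod.ext e10 e11)
    subst hp
    have hnn : n = n' := by
      have e00 : V p + n * p.1.1 = V p + n' * p.1.1 := by
        have := congrArg (fun M : SL2Z => M 0 0) h
        simpa [Phi_entry00] using this
      have e01 : -U p + n * p.1.2 = -U p + n' * p.1.2 := by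
        have := congrArg (fun M : SL2Z => M 0 1) h
        simpa [Phi_entry01] using this
      by_cases hc : p.1.1 = 0
      · have hd : p.1.2 ≠ 0 := by
          intro hd
          exact not_isCoprime_zero_zero (hc ▸ hd ▸ p.2)
        have : n * p.1.2 = n' * p.1.2 := by linarith
        exact mul_right_cancel₀ hd this
      · have : n * p.1.1 = n' * p.1.1 := by linarith
        exact mul_right_cancel₀ hc this
    rw [hnn]
  · intro γ
    have hdet := det_entries γ
    have hcop : IsCoprime (γ 1 0) (γ 1 1) := ⟨-(γ 0 1), γ 0 0, by linarith⟩
    set p : CP := ⟨(γ 1 0, γ 1 1), hcop⟩ with hp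
    have huv := hUV p
    refine ⟨(p, γ 0 0 * U p + γ 0 1 * V p), ?_⟩
    apply Subtype.ext
    ext i j
    fin_cases i <;> fin_cases j
    · show Phi _ 0 0 = γ 0 0
      rw [Phi_entry00]
      simp only [hp] at huv ⊢
      linear_combination (γ 0 0 : ℤ) * huv - V p * hdet
    · show Phi _ 0 1 = γ 0 1
      rw [Phi_entry01]
      simp only [hp] at huv ⊢
      linear_combination (γ 0 1 : ℤ) * huv + U p * hdet
    · show Phi _ 1 0 = γ 1 0
      rw [Phi_entry10]
    · show Phi _ 1 1 = γ 1 1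
      rw [Phi_entry11]

def R0 (z : ℂ) (p : CP) : ℂ := (V p : ℂ) * z - (U p : ℂ)

lemma jZ_Phi (z : ℂ) (x : CP × ℤ) : jZ (Phi x) z = jP x.1.1 z := by
  rw [jZ, Phi_entry10, Phi_entry11, jP]

lemma rZ_Phi (z : ℂ) (x : CP × ℤ) :
    rZ (Phi x) z = R0 z x.1 + (x.2 : ℂ) * jP x.1.1 z := by
  rw [rZ, Phi_entry00, Phi_entry01, jP, R0]
  push_cast
  ring

lemma cp_ne (p : CP) : ¬(p.1.1 = 0 ∧ p.1.2 = 0) := by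
  rintro ⟨h1, h2⟩
  exact not_isCoprime_zero_zero (h1 ▸ h2 ▸ p.2)

lemma jP_ne {z : ℂ} (hz : 0 < z.im) (p : CP) : jP p.1 z ≠ 0 :=
  lin_ne_zero (ne_of_gt hz) (cp_ne p)

lemma R0_det (z : ℂ) (p : CP) :
    (R0 z p * (starRingEnd ℂ) (jP p.1 z)).im = z.im := by
  have h := cross_im z (V p) (-(U p)) p.1.1 p.1.2
  have e : R0 z p = ((V p : ℤ) : ℂ) * z + ((-(U p) : ℤ) : ℂ) := by
    rw [R0]; push_cast; ring
  rw [e, jP, h]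
  have : V p * p.1.2 - -U p * p.1.1 = 1 := by linarith [hUV p]
  rw [this]
  simp

/-- Summability over coprime pairs, via Eisenstein series machinery. -/
lemma summable_jP {z : ℂ} (hz : 0 < z.im) {τ : ℝ} (hτ : 1 < τ) :
    Summable fun p : CP => normSq (jP p.1 z) ^ (-τ) := by
  set Z : UpperHalfPlane := ⟨z, hz⟩ with hZ
  have hb : Summable fun x : Fin 2 → ℤ =>
      EisensteinSeries.r Z ^ (-(2*τ)) * ‖x‖ ^ (-(2*τ)) :=
    (EisensteinSeries.summable_one_div_norm_rpow (by linarith)).mul_left _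
  have H : Summable fun x : Fin 2 → ℤ =>
      ‖(x 0 : ℂ) * z + (x 1 : ℂ)‖ ^ (-(2*τ)) := by
    refine Summable.of_nonneg_of_le
      (fun x => Real.rpow_nonneg (norm_nonneg _) _) (fun x => ?_) hb
    exact EisensteinSeries.summand_bound Z (by linarith : (0:ℝ) ≤ 2*τ) x
  have hinj : Function.Injective (fun p : CP => (![p.1.1, p.1.2] : Fin 2 → ℤ)) := by
    intro p p' h
    have h0 := congrFun h 0
    have h1 := congrFun h 1
    simp only [Matrix.cons_val_zero, Matrix.cons_val_one, Matrix.head_cons] at h0 h1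
    exact Subtype.ext (Prod.ext h0 h1)
  have := H.comp_injective hinj
  refine this.congr fun p => ?_
  simp only [Function.comp_apply, Matrix.cons_val_zero, Matrix.cons_val_one, Matrix.head_cons]
  rw [← jP, ← Complex.sq_norm, ← Real.rpow_natCast (‖jP p.1 z‖) 2,
    ← Real.rpow_mul (norm_nonneg _)]
  norm_num

/-- Main summability over the half of the group where `|q| ≤ |r|`. -/
lemma summable_part {z : ℂ} (hz : 0 < z.im) {e₁ e₂ : ℝ} (he₁ : 1/2 < e₁) (he₂ : 1/2 < e₂) :
    Summable fun γ : SL2Z => ite (normSq (jZ γ z) ≤ normSq (rZ γ z))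
      (normSq (jZ γ z) ^ (-e₁) * normSq (rZ γ z) ^ (-e₂)) 0 := by
  set G : CP × ℤ → ℝ := fun x =>
    ite (normSq (jP x.1.1 z) ≤ normSq (R0 z x.1 + (x.2 : ℂ) * jP x.1.1 z))
      (normSq (jP x.1.1 z) ^ (-e₁) * normSq (R0 z x.1 + (x.2 : ℂ) * jP x.1.1 z) ^ (-e₂)) 0
    with hGdef
  have hGnonneg : ∀ x, 0 ≤ G x := by
    intro x
    rw [hGdef]
    dsimp only
    split
    · exact mul_nonneg (Real.rpow_nonneg (normSq_nonneg _) _)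
        (Real.rpow_nonneg (normSq_nonneg _) _)
    · exact le_rfl
  have hG : Summable G := by
    rw [summable_prod_of_nonneg hGnonneg]
    set Cψ : ℝ := ∑' k : ℤ, psi e₂ k with hCψ
    have hCψ0 : 0 ≤ Cψ := tsum_nonneg (psi_nonneg e₂)
    have hDbound : ∀ p : CP, ∀ n : ℤ, G (p, n) ≤
        (2 ^ e₂ * (normSq (jP p.1 z) ^ (-e₁) * normSq (jP p.1 z) ^ (-e₂))) *
          psi e₂ (n + round ((R0 z p * (starRingEnd ℂ) (jP p.1 z)).re / normSq (jP p.1 z))) := by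
      intro p n
      rw [hGdef]
      dsimp only
      split
      · rename_i hcond
        have hfb := fiber_bound (by linarith : (0:ℝ) ≤ e₂) hz (jP_ne hz p)
          (R0_det z p) n hcond
        calc normSq (jP p.1 z) ^ (-e₁) * normSq (R0 z p + (n : ℂ) * jP p.1 z) ^ (-e₂)
            ≤ normSq (jP p.1 z) ^ (-e₁) *
              (2 ^ e₂ * normSq (jP p.1 z) ^ (-e₂) *
                psi e₂ (n + round ((R0 z p * (starRingEnd ℂ) (jP p.1 z)).re /
                  normSq (jP p.1 z)))) :=
              mul_le_mul_of_nonneg_left hfb (Real.rpow_nonneg (normSq_nonneg _) _)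
        _ = _ := by ring
      · exact mul_nonneg (mul_nonneg (Real.rpow_nonneg (by norm_num) _)
          (mul_nonneg (Real.rpow_nonneg (normSq_nonneg _) _)
            (Real.rpow_nonneg (normSq_nonneg _) _))) (psi_nonneg _ _)
    have hDsummable : ∀ p : CP, Summable fun n : ℤ =>
        (2 ^ e₂ * (normSq (jP p.1 z) ^ (-e₁) * normSq (jP p.1 z) ^ (-e₂))) *
          psi e₂ (n + round ((R0 z p * (starRingEnd ℂ) (jP p.1 z)).re / normSq (jP p.1 z))) := by
      intro p
      set k₀ := round ((R0 z p * (starRingEnd ℂ) (jP p.1 z)).re / normSq (jP p.1 z))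
      have : Summable fun n : ℤ => psi e₂ (n + k₀) :=
        ((Equiv.addRight k₀).summable_iff (f := psi e₂)).mpr (psi_summable he₂)
      exact this.mul_left _
    constructor
    · intro p
      exact Summable.of_nonneg_of_le (fun n => hGnonneg (p, n)) (hDbound p) (hDsummable p)
    · refine Summable.of_nonneg_of_le (fun p => tsum_nonneg fun n => hGnonneg (p, n))
        (fun p => ?_)
        (((summable_jP hz (by linarith : 1 < e₁ + e₂)).mul_left (2 ^ e₂ * Cψ)).congr
          fun p => rfl)
      set k₀ := round ((R0 z p * (starRingEnd ℂ) (jP p.1 z)).re / normSq (jP p.1 z))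
      have htrans : Summable fun n : ℤ => psi e₂ (n + k₀) :=
        ((Equiv.addRight k₀).summable_iff (f := psi e₂)).mpr (psi_summable he₂)
      have hNqpos : 0 < normSq (jP p.1 z) := normSq_pos.mpr (jP_ne hz p)
      calc ∑' n : ℤ, G (p, n)
          ≤ ∑' n : ℤ, (2 ^ e₂ * (normSq (jP p.1 z) ^ (-e₁) * normSq (jP p.1 z) ^ (-e₂))) *
              psi e₂ (n + k₀) :=
            Summable.tsum_le_tsum (hDbound p)
              (Summable.of_nonneg_of_le (fun n => hGnonneg (p, n)) (hDbound p) (hDsummable p))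
              (hDsummable p)
      _ = (2 ^ e₂ * (normSq (jP p.1 z) ^ (-e₁) * normSq (jP p.1 z) ^ (-e₂))) * Cψ := by
            rw [tsum_mul_left, hCψ]
            congr 1
            exact (Equiv.addRight k₀).tsum_eq (psi e₂)
      _ = (2 ^ e₂ * Cψ) * normSq (jP p.1 z) ^ (-(e₁ + e₂)) := by
            rw [← Real.rpow_add hNqpos, show -e₁ + -e₂ = -(e₁+e₂) by ring]
            ring
  have hcomp : ∀ x : CP × ℤ,
      (fun γ : SL2Z => ite (normSq (jZ γ z) ≤ normSq (rZ γ z))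
        (normSq (jZ γ z) ^ (-e₁) * normSq (rZ γ z) ^ (-e₂)) 0) (Phi x) = G x := by
    intro x
    dsimp only
    rw [jZ_Phi, rZ_Phi, hGdef]
  exact (Equiv.ofBijective Phi Phi_bijective).summable_iff.mp
    (hG.congr fun x => (hcomp x).symm)

def Sm : SL2Z := ⟨!![0, -1; 1, 0], by rw [Matrix.det_fin_two_of]; norm_num⟩

lemma Sm_mul_entry (γ : SL2Z) :
    (Sm * γ) 0 0 = -(γ 1 0) ∧ (Sm * γ) 0 1 = -(γ 1 1) ∧
    (Sm * γ) 1 0 = γ 0 0 ∧ (Sm * γ) 1 1 = γ 0 1 := by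
  have h : ((Sm * γ : SL2Z) : Matrix (Fin 2) (Fin 2) ℤ)
      = (Sm : Matrix (Fin 2) (Fin 2) ℤ) * (γ : Matrix (Fin 2) (Fin 2) ℤ) := rfl
  refine ⟨?_, ?_, ?_, ?_⟩ <;>
    · show ((Sm * γ : SL2Z) : Matrix (Fin 2) (Fin 2) ℤ) _ _ = _
      rw [h, Matrix.mul_apply, Fin.sum_univ_two]
      simp [Sm]

lemma jZ_Smul (z : ℂ) (γ : SL2Z) : jZ (Sm * γ) z = rZ γ z := by
  rw [jZ, rZ, (Sm_mul_entry γ).2.2.1, (Sm_mul_entry γ).2.2.2]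

lemma rZ_Smul (z : ℂ) (γ : SL2Z) : rZ (Sm * γ) z = -(jZ γ z) := by
  rw [rZ, jZ, (Sm_mul_entry γ).1, (Sm_mul_entry γ).2.1]
  push_cast
  ring

lemma summable_full {z : ℂ} (hz : 0 < z.im) {e₁ e₂ : ℝ} (he₁ : 1/2 < e₁) (he₂ : 1/2 < e₂) :
    Summable fun γ : SL2Z => normSq (jZ γ z) ^ (-e₁) * normSq (rZ γ z) ^ (-e₂) := by
  have h1 := summable_part hz he₁ he₂
  have h2 := summable_part hz he₂ he₁
  have h2' : Summable fun γ : SL2Z =>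
      ite (normSq (jZ (Sm * γ) z) ≤ normSq (rZ (Sm * γ) z))
        (normSq (jZ (Sm * γ) z) ^ (-e₂) * normSq (rZ (Sm * γ) z) ^ (-e₁)) 0 :=
    h2.comp_injective (mul_right_injective Sm)
  refine Summable.of_nonneg_of_le
    (fun γ => mul_nonneg (Real.rpow_nonneg (normSq_nonneg _) _)
      (Real.rpow_nonneg (normSq_nonneg _) _)) (fun γ => ?_) (h1.add h2')
  by_cases hcase : normSq (jZ γ z) ≤ normSq (rZ γ z)
  · have h2nn : (0:ℝ) ≤ ite (normSq (jZ (Sm * γ) z) ≤ normSq (rZ (Sm * γ) z))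
        (normSq (jZ (Sm * γ) z) ^ (-e₂) * normSq (rZ (Sm * γ) z) ^ (-e₁)) 0 := by
      split
      · exact mul_nonneg (Real.rpow_nonneg (normSq_nonneg _) _)
          (Real.rpow_nonneg (normSq_nonneg _) _)
      · exact le_rfl
    rw [if_pos hcase]
    linarith
  · have h1z : ite (normSq (jZ γ z) ≤ normSq (rZ γ z))
        (normSq (jZ γ z) ^ (-e₁) * normSq (rZ γ z) ^ (-e₂)) 0 = 0 := if_neg hcase
    have hcond2 : normSq (jZ (Sm * γ) z) ≤ normSq (rZ (Sm * γ) z) := by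
      rw [jZ_Smul, rZ_Smul, normSq_neg]
      linarith [not_le.mp hcase]
    have h2v : ite (normSq (jZ (Sm * γ) z) ≤ normSq (rZ (Sm * γ) z))
        (normSq (jZ (Sm * γ) z) ^ (-e₂) * normSq (rZ (Sm * γ) z) ^ (-e₁)) 0
        = normSq (jZ γ z) ^ (-e₁) * normSq (rZ γ z) ^ (-e₂) := by
      rw [if_pos hcond2, jZ_Smul, rZ_Smul, normSq_neg]
      ring
    rw [h1z, h2v]
    linarith

lemma actZ_eq (γ : SL2Z) (z : ℂ) : actZ γ z = rZ γ z / jZ γ z := rfl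

lemma actZ_im {z : ℂ} (hz : 0 < z.im) (γ : SL2Z) :
    (actZ γ z).im = z.im / normSq (jZ γ z) := by
  have h := det_im (z := z) γ
  rw [Complex.mul_im, Complex.conj_re, Complex.conj_im] at h
  rw [actZ_eq, Complex.div_im, div_sub_div_same, ← h]
  ring_nf

lemma actZ_im_pos {z : ℂ} (hz : 0 < z.im) (γ : SL2Z) : 0 < (actZ γ z).im := by
  rw [actZ_im hz]
  exact div_pos hz (normSq_pos.mpr (jZ_ne hz γ))

lemma actZ_ne {z : ℂ} (hz : 0 < z.im) (γ : SL2Z) : actZ γ z ≠ 0 := by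
  intro h
  have := actZ_im_pos hz γ
  rw [h] at this
  simp at this

lemma actZ_abs_pos {z : ℂ} (hz : 0 < z.im) (γ : SL2Z) : 0 < ‖actZ γ z‖ :=
  norm_pos_iff.mpr (actZ_ne hz γ)

/-- Norm of the kernel term. -/
lemma norm_KkerTerm {z : ℂ} (hz : 0 < z.im) (s s' : ℂ) (γ : SL2Z) :
    ‖KkerTerm z s s' γ‖ = z.im ^ (s.re + s'.re) *
      (normSq (jZ γ z) ^ (-s'.re) * normSq (rZ γ z) ^ (-s.re)) := by
  have hq := jZ_ne hz γ
  have hr := rZ_ne hz γ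
  have hNq : 0 < normSq (jZ γ z) := normSq_pos.mpr hq
  have hNr : 0 < normSq (rZ γ z) := normSq_pos.mpr hr
  have hA : 0 < (actZ γ z).im := actZ_im_pos hz γ
  have hB : 0 < ‖actZ γ z‖ := actZ_abs_pos hz γ
  have hB2 : ‖actZ γ z‖ ^ 2 = normSq (rZ γ z) / normSq (jZ γ z) := by
    rw [Complex.sq_norm, actZ_eq, map_div₀]
  rw [KkerTerm, norm_div,
    Complex.norm_cpow_eq_rpow_re_of_pos hA, Complex.norm_cpow_eq_rpow_re_of_pos hB,
    Complex.add_re, show ((2:ℂ) * s).re = 2 * s.re by simp]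
  rw [actZ_im hz, show ‖actZ γ z‖ ^ (2 * s.re)
      = (‖actZ γ z‖ ^ 2) ^ s.re by
    rw [← Real.rpow_natCast (‖actZ γ z‖) 2,
      ← Real.rpow_mul (norm_nonneg _)]; norm_num, hB2]
  rw [Real.div_rpow hz.le hNq.le, Real.div_rpow hNr.le hNq.le,
    Real.rpow_neg hNq.le, Real.rpow_neg hNr.le,
    Real.rpow_add hNq]
  have k1 : normSq (jZ γ z) ^ s.re ≠ 0 := (Real.rpow_pos_of_pos hNq _).ne'
  have k2 : normSq (jZ γ z) ^ s'.re ≠ 0 := (Real.rpow_pos_of_pos hNq _).ne'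
  have k3 : normSq (rZ γ z) ^ s.re ≠ 0 := (Real.rpow_pos_of_pos hNr _).ne'
  field_simp

/-- Swap identity for the kernel term. -/
lemma KkerTerm_swap {z : ℂ} (hz : 0 < z.im) (s s' : ℂ) (γ : SL2Z) :
    KkerTerm z s s' (Sm * γ) = KkerTerm z s' s γ := by
  set w := actZ γ z with hw
  have hA : 0 < w.im := actZ_im_pos hz γ
  have hB : 0 < ‖w‖ := actZ_abs_pos hz γ
  have hact : actZ (Sm * γ) z = -w⁻¹ := by
    rw [actZ_eq, rZ_Smul, jZ_Smul, hw, actZ_eq, inv_div, neg_div]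
  have him' : (actZ (Sm * γ) z).im = w.im / ‖w‖ ^ 2 := by
    rw [hact, Complex.neg_im, Complex.inv_im, Complex.sq_norm, neg_div, neg_neg]
  have habs' : ‖actZ (Sm * γ) z‖ = (‖w‖)⁻¹ := by
    rw [hact, norm_neg, norm_inv]
  rw [KkerTerm, KkerTerm, him', habs']
  set A := w.im
  set B := ‖w‖
  have hBne : ((B:ℝ):ℂ) ≠ 0 := Complex.ofReal_ne_zero.mpr hB.ne'
  have harg : ((B:ℝ):ℂ).arg ≠ Real.pi := by
    rw [Complex.arg_ofReal_of_nonneg hB.le]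
    exact Ne.symm Real.pi_ne_zero
  have e1 : (((A / B^2 : ℝ)):ℂ)^(s+s')
      = ((A:ℝ):ℂ)^(s+s') * (((B:ℝ):ℂ)^(s+s'))⁻¹ * (((B:ℝ):ℂ)^(s+s'))⁻¹ := by
    have hdecomp : (A / B^2 : ℝ) = A * B⁻¹ * B⁻¹ := by
      rw [pow_two, div_eq_mul_inv, mul_inv]
      ring
    rw [hdecomp, Complex.ofReal_mul,
      mul_cpow_ofReal_nonneg (mul_nonneg hA.le (inv_nonneg.mpr hB.le)) (inv_nonneg.mpr hB.le),
      Complex.ofReal_mul, mul_cpow_ofReal_nonneg hA.le (inv_nonneg.mpr hB.le)]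
    simp only [Complex.ofReal_inv, Complex.inv_cpow _ _ harg]
  have e2 : ((B⁻¹:ℝ):ℂ)^(2*s) = (((B:ℝ):ℂ)^(2*s))⁻¹ := by
    rw [Complex.ofReal_inv, Complex.inv_cpow _ _ harg]
  rw [e1, e2]
  have hkey : ((B:ℝ):ℂ)^(s+s') * ((B:ℝ):ℂ)^(s+s')
      = ((B:ℝ):ℂ)^(2*s) * ((B:ℝ):ℂ)^(2*s') := by
    rw [← Complex.cpow_add _ _ hBne, ← Complex.cpow_add _ _ hBne]
    ring_nf
  have c1 : ((B:ℝ):ℂ)^(s+s') ≠ 0 := by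
    simp only [ne_eq, Complex.cpow_eq_zero_iff, not_and_or]
    exact Or.inl hBne
  have c2 : ((B:ℝ):ℂ)^(2*s) ≠ 0 := by
    simp only [ne_eq, Complex.cpow_eq_zero_iff, not_and_or]
    exact Or.inl hBne
  have c3 : ((B:ℝ):ℂ)^(2*s') ≠ 0 := by
    simp only [ne_eq, Complex.cpow_eq_zero_iff, not_and_or]
    exact Or.inl hBne
  rw [show s' + s = s + s' from add_comm _ _]
  set A' := ((A:ℝ):ℂ)^(s+s')
  set P := ((B:ℝ):ℂ)^(s+s')
  set Q := ((B:ℝ):ℂ)^(2*s)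
  set R := ((B:ℝ):ℂ)^(2*s')
  calc A' * P⁻¹ * P⁻¹ / Q⁻¹ = A' * Q * (P * P)⁻¹ := by
        rw [div_eq_mul_inv, inv_inv, mul_inv]; ring
  _ = A' * Q * (Q * R)⁻¹ := by rw [hkey]
  _ = A' / R := by
        rw [mul_inv, show A' * Q * (Q⁻¹ * R⁻¹) = A' * (Q * Q⁻¹) * R⁻¹ by ring,
          mul_inv_cancel₀ c2, mul_one, div_eq_mul_inv]

end St16

/-- the kernel `K(z;s,s') = (1/2) Σ_{γ∈SL(2,ℤ)} Im(γz)^{s+s'}/|γz|^{2s}`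
converges absolutely for `Re s, Re s' > 1/2` and is symmetric in `s, s'`. -/
theorem statement16 (z : ℂ) (hz : 0 < z.im) (s s' : ℂ)
    (hs : 1 / 2 < s.re) (hs' : 1 / 2 < s'.re) :
    (Summable fun γ : SL2Z => ‖KkerTerm z s s' γ‖) ∧ Kker z s s' = Kker z s' s := by

  constructor
  · have h := (St16.summable_full hz hs' hs).mul_left (z.im ^ (s.re + s'.re))
    exact h.congr fun γ => (St16.norm_KkerTerm hz s s' γ).symm
  · rw [Kker, Kker]
    congr 1
    calc ∑' γ : SL2Z, KkerTerm z s s' γ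
        = ∑' γ : SL2Z, KkerTerm z s s' (St16.Sm * γ) :=
          ((Equiv.mulLeft St16.Sm).tsum_eq fun γ => KkerTerm z s s' γ).symm
    _ = ∑' γ : SL2Z, KkerTerm z s' s γ := tsum_congr fun γ => St16.KkerTerm_swap hz s s' γ
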